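/- arXiv:1510.02045 — 7 statements merged into one kernel-verified Lean document; each statement's English description precedes it below -/
import Mathlib

section
/- Fix μ in the convex hull M of a finite set Ω ⊆ ℝⁿ and fix ν ∈ M. Then there exists a minimal face X_ν of M (a face being a subset X ⊆ Ω that is the set of maximizers over Ω of some linear functional, or the empty set) such that ν ∈ conv(X_ν ∪ {μ}), and for every face X with ν ∈ conv(X ∪ {μ}) one has X_ν ⊆ X. -/
open scoped RealInnerProductSpace

/-- A face of `M = conv(Ω)`: either the empty set, or the set of maximizers over `Ω`
of some linear functional. -/
def IsFace {n : ℕ} (Ω X : Set (EuclideanSpace ℝ (Fin n))) : Prop :=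
  X = ∅ ∨ ∃ u : EuclideanSpace ℝ (Fin n),
    X = {ω ∈ Ω | ∀ ω' ∈ Ω, ⟪u, ω'⟫ ≤ ⟪u, ω⟫}

namespace MinFaceAux


variable {n : ℕ}

local notation "E" => EuclideanSpace ℝ (Fin n)

lemma isLinearMap_inner (u : E) : IsLinearMap ℝ (fun z : E => ⟪u, z⟫) :=
  ⟨fun x y => inner_add_right u x y, fun c x => real_inner_smul_right u x c⟩

lemma hull_inner_le {S : Set E} {u : E} {c : ℝ} (h : ∀ ω ∈ S, ⟪u, ω⟫ ≤ c)
    {z : E} (hz : z ∈ convexHull ℝ S) : ⟪u, z⟫ ≤ c :=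
  convexHull_min h (convex_halfSpace_le (isLinearMap_inner u) c) hz

lemma hull_inner_eq {S : Set E} {u : E} {c : ℝ} (h : ∀ ω ∈ S, ⟪u, ω⟫ = c)
    {z : E} (hz : z ∈ convexHull ℝ S) : ⟪u, z⟫ = c :=
  convexHull_min h (convex_hyperplane (isLinearMap_inner u) c) hz

lemma mem_hull_filter {s : Finset E} {u z : E} {c : ℝ}
    (hmax : ∀ ω ∈ s, ⟪u, ω⟫ ≤ c)
    (hz : z ∈ convexHull ℝ (↑s : Set E)) (hc : c ≤ ⟪u, z⟫) :
    z ∈ convexHull ℝ (↑(s.filter fun ω => c ≤ ⟪u, ω⟫) : Set E) := by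
  classical
  rw [Finset.convexHull_eq] at hz
  obtain ⟨w, hw0, hw1, hwz⟩ := hz
  have hzc : z = ∑ ω ∈ s, w ω • ω := by
    rw [← hwz, Finset.centerMass_eq_of_sum_1 _ _ hw1]; simp
  have hinner : ⟪u, z⟫ = ∑ ω ∈ s, w ω * ⟪u, ω⟫ := by
    rw [hzc, inner_sum]
    exact Finset.sum_congr rfl fun ω _ => real_inner_smul_right u ω (w ω)
  have hsupport : ∀ ω ∈ s, w ω ≠ 0 → c ≤ ⟪u, ω⟫ := by
    by_contra h
    push_neg at h
    obtain ⟨ω₀, hω₀s, hω₀w, hω₀c⟩ := h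
    have hlt : ∑ ω ∈ s, w ω * ⟪u, ω⟫ < ∑ ω ∈ s, w ω * c := by
      apply Finset.sum_lt_sum
      · intro i hi; exact mul_le_mul_of_nonneg_left (hmax i hi) (hw0 i hi)
      · exact ⟨ω₀, hω₀s,
          mul_lt_mul_of_pos_left hω₀c (lt_of_le_of_ne (hw0 ω₀ hω₀s) (Ne.symm hω₀w))⟩
    rw [← Finset.sum_mul, hw1, one_mul] at hlt
    exact absurd (hc.trans_eq hinner) (not_le.mpr hlt)
  have hzt : z ∈ convexHull ℝ (↑(s.filter fun ω => w ω ≠ 0) : Set E) := by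
    rw [← hwz, ← Finset.centerMass_filter_ne_zero (w := w)]
    apply Finset.centerMass_mem_convexHull
    · intro i hi; exact hw0 i (Finset.mem_filter.mp hi).1
    · rw [Finset.sum_filter_ne_zero, hw1]; norm_num
    · intro i hi; exact Finset.mem_coe.mpr hi
  refine convexHull_mono ?_ hzt
  intro ω hω
  simp only [Finset.coe_filter, Set.mem_setOf_eq] at hω ⊢
  exact ⟨hω.1, hsupport ω hω.1 hω.2⟩

lemma hull_union_singleton_mem {S : Set E} {μ ν : E} (hS : S.Nonempty)
    (hν : ν ∈ convexHull ℝ (S ∪ {μ})) :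
    ∃ x ∈ convexHull ℝ S, ∃ t t' : ℝ, 0 ≤ t ∧ 0 ≤ t' ∧ t + t' = 1 ∧ t • μ + t' • x = ν := by
  rw [Set.union_singleton, convexHull_insert hS, mem_convexJoin] at hν
  obtain ⟨a, ha, x, hx, hseg⟩ := hν
  rw [Set.mem_singleton_iff] at ha
  subst ha
  obtain ⟨t, t', ht, ht', htt, hv⟩ := hseg
  exact ⟨x, hx, t, t', ht, ht', htt, hv⟩

lemma segment_mem_hull {S : Set E} {μ x ν : E} (hx : x ∈ convexHull ℝ S)
    {t t' : ℝ} (ht : 0 ≤ t) (ht' : 0 ≤ t') (htt : t + t' = 1)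
    (hν : t • μ + t' • x = ν) : ν ∈ convexHull ℝ (S ∪ {μ}) := by
  have hμ : μ ∈ convexHull ℝ (S ∪ {μ}) :=
    subset_convexHull ℝ _ (Set.mem_union_right _ rfl)
  have hx' : x ∈ convexHull ℝ (S ∪ {μ}) :=
    convexHull_mono Set.subset_union_left hx
  rw [← hν]
  exact (convex_convexHull ℝ _) hμ hx' ht ht' htt

lemma mu_mem_hull {S : Set E} {μ : E} : μ ∈ convexHull ℝ (S ∪ {μ}) :=
  subset_convexHull ℝ _ (Set.mem_union_right _ rfl)

lemma push_to_inter {Ω : Finset E} {u : E} {cu : ℝ}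
    (hcu : ∀ ω ∈ Ω, ⟪u, ω⟫ ≤ cu)
    {X Y : Set E} (hXchar : ∀ ω, ω ∈ X ↔ ω ∈ Ω ∧ cu ≤ ⟪u, ω⟫)
    (hYΩ : Y ⊆ ↑Ω) {y : E} (hy : y ∈ convexHull ℝ Y) (hyc : cu ≤ ⟪u, y⟫) :
    y ∈ convexHull ℝ (X ∩ Y) := by
  classical
  have hYT : Y = ↑(Ω.filter (· ∈ Y)) := by
    ext ω
    simp only [Finset.coe_filter, Set.mem_setOf_eq, Finset.mem_coe]
    exact ⟨fun h => ⟨Finset.mem_coe.mp (hYΩ h), h⟩, fun h => h.2⟩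
  rw [hYT] at hy
  have h1 := mem_hull_filter (fun ω hω => hcu ω (Finset.mem_filter.mp hω).1) hy hyc
  refine convexHull_mono ?_ h1
  intro ω hω
  simp only [Finset.coe_filter, Set.mem_setOf_eq, Finset.mem_filter] at hω
  exact ⟨(hXchar ω).mpr ⟨hω.1.1, hω.2⟩, hω.1.2⟩

lemma face_subset {Ω X : Set E} (h : IsFace Ω X) : X ⊆ Ω := by
  rcases h with h | ⟨u, h⟩
  · simp [h]
  · rw [h]; exact fun ω hω => hω.1

lemma key {Ω : Finset E} {μ ν : E} (hμ : μ ∈ convexHull ℝ (↑Ω : Set E))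
    {X Y : Set E} (hX : IsFace (↑Ω) X) (hY : IsFace (↑Ω) Y)
    (hνX : ν ∈ convexHull ℝ (X ∪ {μ})) (hνY : ν ∈ convexHull ℝ (Y ∪ {μ})) :
    IsFace (↑Ω) (X ∩ Y) ∧ ν ∈ convexHull ℝ ((X ∩ Y) ∪ {μ}) := by
  classical
  rcases Set.eq_empty_or_nonempty X with hXe | hXne
  · subst hXe
    rw [Set.empty_union, convexHull_singleton, Set.mem_singleton_iff] at hνX
    subst hνX
    exact ⟨Or.inl (Set.empty_inter Y), mu_mem_hull⟩
  rcases Set.eq_empty_or_nonempty Y with hYe | hYne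
  · subst hYe
    rw [Set.empty_union, convexHull_singleton, Set.mem_singleton_iff] at hνY
    subst hνY
    exact ⟨Or.inl (Set.inter_empty X), mu_mem_hull⟩
  -- extract functionals
  rcases hX with hXe | ⟨u, hXu⟩
  · exact absurd hXe (Set.nonempty_iff_ne_empty.mp hXne)
  rcases hY with hYe | ⟨v, hYv⟩
  · exact absurd hYe (Set.nonempty_iff_ne_empty.mp hYne)
  have hXΩ : X ⊆ (↑Ω : Set E) := by rw [hXu]; exact fun ω hω => hω.1
  have hYΩ : Y ⊆ (↑Ω : Set E) := by rw [hYv]; exact fun ω hω => hω.1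
  have hΩne : Ω.Nonempty := by
    obtain ⟨ω, hω⟩ := hXne
    exact ⟨ω, Finset.mem_coe.mp (hXΩ hω)⟩
  obtain ⟨ωu, hωu, hωumax⟩ := Finset.exists_max_image Ω (fun ω => ⟪u, ω⟫) hΩne
  obtain ⟨ωv, hωv, hωvmax⟩ := Finset.exists_max_image Ω (fun ω => ⟪v, ω⟫) hΩne
  set cu := ⟪u, ωu⟫ with hcu
  set cv := ⟪v, ωv⟫ with hcv
  have hXchar : ∀ ω, ω ∈ X ↔ ω ∈ Ω ∧ cu ≤ ⟪u, ω⟫ := by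
    intro ω
    rw [hXu]
    constructor
    · rintro ⟨hω1, hω2⟩
      exact ⟨Finset.mem_coe.mp hω1, hω2 ωu (Finset.mem_coe.mpr hωu)⟩
    · rintro ⟨hω1, hω2⟩
      exact ⟨Finset.mem_coe.mpr hω1, fun ω' hω' =>
        le_trans (hωumax ω' (Finset.mem_coe.mp hω')) hω2⟩
  have hYchar : ∀ ω, ω ∈ Y ↔ ω ∈ Ω ∧ cv ≤ ⟪v, ω⟫ := by
    intro ω
    rw [hYv]
    constructor
    · rintro ⟨hω1, hω2⟩
      exact ⟨Finset.mem_coe.mp hω1, hω2 ωv (Finset.mem_coe.mpr hωv)⟩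
    · rintro ⟨hω1, hω2⟩
      exact ⟨Finset.mem_coe.mpr hω1, fun ω' hω' =>
        le_trans (hωvmax ω' (Finset.mem_coe.mp hω')) hω2⟩
  have hXeq : ∀ ω ∈ X, ⟪u, ω⟫ = cu := fun ω hω =>
    le_antisymm (hωumax ω (Finset.mem_coe.mp (hXΩ hω))) ((hXchar ω).mp hω).2
  have hYeq : ∀ ω ∈ Y, ⟪v, ω⟫ = cv := fun ω hω =>
    le_antisymm (hωvmax ω (Finset.mem_coe.mp (hYΩ hω))) ((hYchar ω).mp hω).2
  have hΩu : ∀ ω ∈ (↑Ω : Set E), ⟪u, ω⟫ ≤ cu := fun ω hω => hωumax ω (Finset.mem_coe.mp hω)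
  have hΩv : ∀ ω ∈ (↑Ω : Set E), ⟪v, ω⟫ ≤ cv := fun ω hω => hωvmax ω (Finset.mem_coe.mp hω)
  -- face of the intersection
  have hface : IsFace (↑Ω) (X ∩ Y) := by
    rcases Set.eq_empty_or_nonempty (X ∩ Y) with hIe | ⟨ω₁, hω₁⟩
    · exact Or.inl hIe
    · refine Or.inr ⟨u + v, ?_⟩
      have hω₁u : ⟪u, ω₁⟫ = cu := hXeq ω₁ hω₁.1
      have hω₁v : ⟪v, ω₁⟫ = cv := hYeq ω₁ hω₁.2
      ext ω
      constructor
      · intro hω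
        refine ⟨hXΩ hω.1, fun ω' hω' => ?_⟩
        rw [inner_add_left, inner_add_left, hXeq ω hω.1, hYeq ω hω.2]
        exact add_le_add (hΩu ω' hω') (hΩv ω' hω')
      · rintro ⟨hωΩ, hωmax⟩
        have h1 := hωmax ω₁ (hXΩ hω₁.1)
        rw [inner_add_left, inner_add_left, hω₁u, hω₁v] at h1
        have h2 : ⟪u, ω⟫ ≤ cu := hΩu ω hωΩ
        have h3 : ⟪v, ω⟫ ≤ cv := hΩv ω hωΩ
        have h4 : ⟪u, ω⟫ = cu := by linarith
        have h5 : ⟪v, ω⟫ = cv := by linarith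
        exact ⟨(hXchar ω).mpr ⟨Finset.mem_coe.mp hωΩ, h4.ge⟩,
               (hYchar ω).mpr ⟨Finset.mem_coe.mp hωΩ, h5.ge⟩⟩
  refine ⟨hface, ?_⟩
  -- decompositions
  obtain ⟨x, hx, t, t', ht, ht', htt, hνx⟩ := hull_union_singleton_mem hXne hνX
  obtain ⟨y, hy, s, s', hs, hs', hss, hνy⟩ := hull_union_singleton_mem hYne hνY
  have hxu : ⟪u, x⟫ = cu := hull_inner_eq hXeq hx
  have hyv : ⟪v, y⟫ = cv := hull_inner_eq hYeq hy
  have hyu : ⟪u, y⟫ ≤ cu := hull_inner_le (fun ω hω => hΩu ω (hYΩ hω)) hy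
  have hxv : ⟪v, x⟫ ≤ cv := hull_inner_le (fun ω hω => hΩv ω (hXΩ hω)) hx
  have hμu : ⟪u, μ⟫ ≤ cu := hull_inner_le hΩu hμ
  have hμv : ⟪v, μ⟫ ≤ cv := hull_inner_le hΩv hμ
  have e1 : ⟪u, ν⟫ = t * ⟪u, μ⟫ + t' * ⟪u, x⟫ := by
    rw [← hνx, inner_add_right, real_inner_smul_right, real_inner_smul_right]
  have e2 : ⟪u, ν⟫ = s * ⟪u, μ⟫ + s' * ⟪u, y⟫ := by
    rw [← hνy, inner_add_right, real_inner_smul_right, real_inner_smul_right]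
  have f1 : ⟪v, ν⟫ = t * ⟪v, μ⟫ + t' * ⟪v, x⟫ := by
    rw [← hνx, inner_add_right, real_inner_smul_right, real_inner_smul_right]
  have f2 : ⟪v, ν⟫ = s * ⟪v, μ⟫ + s' * ⟪v, y⟫ := by
    rw [← hνy, inner_add_right, real_inner_smul_right, real_inner_smul_right]
  have ht1 : t' = 1 - t := by linarith
  have hs1 : s' = 1 - s := by linarith
  rw [hxu, ht1] at e1
  rw [hs1] at e2
  rw [ht1] at f1
  rw [hyv, hs1] at f2
  rcases lt_trichotomy t s with hts | hts | hts
  · -- t < s : use u and y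
    have hμcu : ⟪u, μ⟫ = cu := by
      refine le_antisymm hμu ?_
      by_contra hlt
      push_neg at hlt
      have h1 : (1 - s) * ⟪u, y⟫ ≤ (1 - s) * cu :=
        mul_le_mul_of_nonneg_left hyu (by linarith)
      have h2 : 0 < (s - t) * (cu - ⟪u, μ⟫) := mul_pos (by linarith) (by linarith)
      linarith [e1, e2]
    rw [hμcu] at e1 e2
    have hνcu : ⟪u, ν⟫ = cu := by rw [e1]; ring
    rcases eq_or_lt_of_le hs' with hs'0 | hs'0
    · -- s' = 0, ν = μ
      have : ν = μ := by
        rw [← hνy, ← hs'0]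
        have : s = 1 := by linarith
        simp [this]
      rw [this]; exact mu_mem_hull
    · have hycu : ⟪u, y⟫ = cu := by
        refine le_antisymm hyu ?_
        by_contra hlt
        push_neg at hlt
        have h1 : (1 - s) * ⟪u, y⟫ < (1 - s) * cu :=
          mul_lt_mul_of_pos_left hlt (by linarith)
        linarith [e2, hνcu]
      have hyI : y ∈ convexHull ℝ (X ∩ Y) :=
        push_to_inter (fun ω hω => hωumax ω hω) hXchar hYΩ hy hycu.ge
      exact segment_mem_hull hyI hs hs' hss hνy
  · -- t = s
    subst hts
    have ht's' : t' = s' := by linarith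
    subst ht's'
    rcases eq_or_lt_of_le ht' with ht'0 | ht'0
    · have : ν = μ := by
        rw [← hνx, ← ht'0]
        have : t = 1 := by linarith
        simp [this]
      rw [this]; exact mu_mem_hull
    · have hxy : x = y := by
        have h := hνx.trans hνy.symm
        have h2 : t' • x = t' • y := by
          have := add_left_cancel h
          exact this
        exact smul_right_injective _ (ne_of_gt ht'0) h2
      subst hxy
      have hxI : x ∈ convexHull ℝ (X ∩ Y) :=
        push_to_inter (fun ω hω => hωumax ω hω) hXchar hYΩ hy hxu.ge
      exact segment_mem_hull hxI ht ht' htt hνx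
  · -- s < t : use v and x
    have hμcv : ⟪v, μ⟫ = cv := by
      refine le_antisymm hμv ?_
      by_contra hlt
      push_neg at hlt
      have h1 : (1 - t) * ⟪v, x⟫ ≤ (1 - t) * cv :=
        mul_le_mul_of_nonneg_left hxv (by linarith)
      have h2 : 0 < (t - s) * (cv - ⟪v, μ⟫) := mul_pos (by linarith) (by linarith)
      linarith [f1, f2]
    rw [hμcv] at f1 f2
    have hνcv : ⟪v, ν⟫ = cv := by rw [f2]; ring
    rcases eq_or_lt_of_le ht' with ht'0 | ht'0
    · have : ν = μ := by
        rw [← hνx, ← ht'0]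
        have : t = 1 := by linarith
        simp [this]
      rw [this]; exact mu_mem_hull
    · have hxcv : ⟪v, x⟫ = cv := by
        refine le_antisymm hxv ?_
        by_contra hlt
        push_neg at hlt
        have h1 : (1 - t) * ⟪v, x⟫ < (1 - t) * cv :=
          mul_lt_mul_of_pos_left hlt (by linarith)
        linarith [f1, hνcv]
      have hxI : x ∈ convexHull ℝ (Y ∩ X) :=
        push_to_inter (fun ω hω => hωvmax ω hω) hYchar hXΩ hx hxcv.ge
      rw [Set.inter_comm] at hxI
      exact segment_mem_hull hxI ht ht' htt hνx

end MinFaceAux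

open MinFaceAux in
/-- Existence of the minimal face: for fixed `μ, ν ∈ M = conv(Ω)`, there is a minimal
face `X_ν` with `ν ∈ conv(X_ν ∪ {μ})`, contained in every face `X` with
`ν ∈ conv(X ∪ {μ})`. -/
theorem exists_minimal_face (n : ℕ) (Ω : Finset (EuclideanSpace ℝ (Fin n)))
    (μ ν : EuclideanSpace ℝ (Fin n))
    (hμ : μ ∈ convexHull ℝ (↑Ω : Set (EuclideanSpace ℝ (Fin n))))
    (hν : ν ∈ convexHull ℝ (↑Ω : Set (EuclideanSpace ℝ (Fin n)))) :
    ∃ Xν : Set (EuclideanSpace ℝ (Fin n)),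
      IsFace (↑Ω) Xν ∧ ν ∈ convexHull ℝ (Xν ∪ {μ}) ∧
      ∀ X : Set (EuclideanSpace ℝ (Fin n)),
        IsFace (↑Ω) X → ν ∈ convexHull ℝ (X ∪ {μ}) → Xν ⊆ X := by
  classical
  set P : Finset (EuclideanSpace ℝ (Fin n)) → Prop := fun T =>
    IsFace (↑Ω : Set (EuclideanSpace ℝ (Fin n))) (↑T : Set (EuclideanSpace ℝ (Fin n))) ∧ ν ∈ convexHull ℝ ((↑T : Set (EuclideanSpace ℝ (Fin n))) ∪ {μ}) with hP
  have hΩP : Ω ∈ Ω.powerset.filter P := by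
    rw [Finset.mem_filter, Finset.mem_powerset]
    refine ⟨subset_rfl, Or.inr ⟨0, ?_⟩, convexHull_mono Set.subset_union_left hν⟩
    ext ω
    simp [inner_zero_left]
  obtain ⟨T₀, hT₀mem, hT₀min⟩ :=
    Finset.exists_min_image (Ω.powerset.filter P) Finset.card ⟨Ω, hΩP⟩
  rw [Finset.mem_filter, Finset.mem_powerset] at hT₀mem
  obtain ⟨hT₀Ω, hT₀face, hT₀ν⟩ := hT₀mem
  refine ⟨↑T₀, hT₀face, hT₀ν, ?_⟩
  intro X hXface hXν
  obtain ⟨hIface, hIν⟩ := key hμ hT₀face hXface hT₀ν hXν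
  set T' : Finset (EuclideanSpace ℝ (Fin n)) :=
    Ω.filter (fun ω => ω ∈ ((↑T₀ : Set (EuclideanSpace ℝ (Fin n))) ∩ X)) with hT'
  have hT'coe : (↑T' : Set (EuclideanSpace ℝ (Fin n))) = (↑T₀ : Set _) ∩ X := by
    ext ω
    simp only [hT', Finset.coe_filter, Set.mem_setOf_eq, Set.mem_inter_iff, Finset.mem_coe]
    exact ⟨fun h => h.2, fun h => ⟨hT₀Ω h.1, h⟩⟩
  have hT'mem : T' ∈ Ω.powerset.filter P := by
    rw [Finset.mem_filter, Finset.mem_powerset]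
    refine ⟨Finset.filter_subset _ _, ?_, ?_⟩
    · rw [hT'coe]; exact hIface
    · rw [hT'coe]; exact hIν
  have hsub : T' ⊆ T₀ := by
    intro ω hω
    have : ω ∈ (↑T' : Set (EuclideanSpace ℝ (Fin n))) := Finset.mem_coe.mpr hω
    rw [hT'coe] at this
    exact Finset.mem_coe.mp this.1
  have hcard : T₀.card ≤ T'.card := hT₀min T' hT'mem
  have heq : T' = T₀ := Finset.eq_of_subset_of_card_le hsub hcard
  intro ω hω
  have : ω ∈ (↑T' : Set (EuclideanSpace ℝ (Fin n))) := by rw [heq]; exact hω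
  rw [hT'coe] at this
  exact this.2
end

section
/- Let C be convex differentiable with bounded loss on Ω (C*(ω) < ∞ for all ω ∈ Ω). If q₀ is arbitrage-free for belief μ ∈ conv(Ω) (i.e., q₀ is optimal for the budget-constrained problem with B = 0), then ∇C(q₀) ∈ conv(Ω). -/
open scoped RealInnerProductSpace

/-- If `q₀` is arbitrage-free for a belief `μ ∈ conv(Ω)` (a zero-budget trader cannot
gain expected utility), then the price vector `∇C(q₀)` lies in `conv(Ω)`. -/
theorem arbitrage_free_price_in_hull (n : ℕ) (Ω : Finset (EuclideanSpace ℝ (Fin n)))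
    (C : EuclideanSpace ℝ (Fin n) → ℝ)
    (hconv : ConvexOn ℝ Set.univ C) (hdiff : Differentiable ℝ C)
    (hfin : ∀ ω ∈ Ω, BddAbove {r : ℝ | ∃ p : EuclideanSpace ℝ (Fin n), r = ⟪p, ω⟫ - C p})
    (μ : EuclideanSpace ℝ (Fin n))
    (hμ : μ ∈ convexHull ℝ (↑Ω : Set (EuclideanSpace ℝ (Fin n))))
    (q₀ : EuclideanSpace ℝ (Fin n))
    (harb : ∀ q : EuclideanSpace ℝ (Fin n),
      (∀ ω ∈ Ω, 0 ≤ ⟪q - q₀, ω⟫ - C q + C q₀) →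
      ⟪q - q₀, μ⟫ - C q + C q₀ ≤ 0) :
    gradient C q₀ ∈ convexHull ℝ (↑Ω : Set (EuclideanSpace ℝ (Fin n))) := by
  classical
  by_contra hg
  let E := EuclideanSpace ℝ (Fin n)
  -- separate the gradient from the hull
  have hclosed : IsClosed (convexHull ℝ (↑Ω : Set E)) :=
    (Ω.finite_toSet.isCompact_convexHull (𝕜 := ℝ)).isClosed
  obtain ⟨f, u, hfu, hub⟩ :=
    geometric_hahn_banach_point_closed (convex_convexHull ℝ _) hclosed hg
  set v : E := (InnerProductSpace.toDual ℝ E).symm f with hv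
  have hfy : ∀ y : E, f y = ⟪v, y⟫ := by
    intro y
    rw [hv, ← InnerProductSpace.toDual_apply_apply, (InnerProductSpace.toDual ℝ E).apply_symm_apply]
  -- directional derivative of C at q₀ in direction v
  have hgrad : HasFDerivAt C (InnerProductSpace.toDual ℝ E (gradient C q₀)) q₀ :=
    (hasGradientAt_iff_hasFDerivAt).mp (hdiff q₀).hasGradientAt
  have hline : HasDerivAt (fun t : ℝ => q₀ + t • v) v 0 := by
    simpa using ((hasDerivAt_id (0 : ℝ)).smul_const v).const_add q₀
  have hφ : HasDerivAt (fun t : ℝ => C (q₀ + t • v)) ⟪gradient C q₀, v⟫ 0 := by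
    have : HasFDerivAt C (InnerProductSpace.toDual ℝ E (gradient C q₀))
        ((fun t : ℝ => q₀ + t • v) 0) := by simpa using hgrad
    have h := this.comp_hasDerivAt 0 hline
    rw [InnerProductSpace.toDual_apply_apply] at h
    exact h
  have hgu : ⟪gradient C q₀, v⟫ < u := by
    have := hfu
    rw [hfy (gradient C q₀), real_inner_comm] at this
    exact this
  -- find small positive t with slope < u
  have hslope : Filter.Tendsto (fun t : ℝ => (C (q₀ + t • v) - C q₀) / t)
      (nhdsWithin 0 (Set.Ioi 0)) (nhds ⟪gradient C q₀, v⟫) := by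
    have h1 := hasDerivAt_iff_tendsto_slope.mp hφ
    have h2 : Filter.Tendsto (slope (fun t : ℝ => C (q₀ + t • v)) 0)
        (nhdsWithin 0 (Set.Ioi 0)) (nhds ⟪gradient C q₀, v⟫) :=
      h1.mono_left (nhdsWithin_mono _ (fun t ht => ne_of_gt ht))
    refine h2.congr fun t => ?_
    simp [slope_def_field]
  have hev : ∀ᶠ t in nhdsWithin (0:ℝ) (Set.Ioi 0),
      (C (q₀ + t • v) - C q₀) / t < u :=
    hslope.eventually (Filter.Tendsto.eventually_lt_const hgu Filter.tendsto_id)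
  obtain ⟨t, htu, ht0⟩ :=
    (hev.and (eventually_mem_nhdsWithin)).exists
  have ht0' : (0:ℝ) < t := ht0
  set q : E := q₀ + t • v with hq
  have hCq : C q - C q₀ < t * u := by
    have := (div_lt_iff₀ ht0').mp htu
    linarith [this]
  have hqq : q - q₀ = t • v := by rw [hq]; abel
  have hinner : ∀ y : E, ⟪q - q₀, y⟫ = t * f y := by
    intro y
    rw [hqq, real_inner_smul_left, hfy]
  have hfeas : ∀ ω ∈ Ω, 0 ≤ ⟪q - q₀, ω⟫ - C q + C q₀ := by
    intro ω hω
    have hfω : u < f ω := hub ω (subset_convexHull ℝ _ hω)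
    rw [hinner]
    nlinarith
  have hμf : u < f μ := hub μ hμ
  have := harb q hfeas
  rw [hinner] at this
  nlinarith
end

section
/- Let C be convex differentiable, q₀ ∈ ℝⁿ with ∇C(q₀) ∈ conv(Ω), and let q be an optimal solution to the budget-zero problem (maximize U(q,μ;q₀) subject to U(q,ω;q₀) ≥ 0 for all ω ∈ Ω). Then ∇C(q) = ∇C(q₀), and for any convex-combination weights c_ω ≥ 0 with Σ c_ω = 1 and Σ c_ω ω = ∇C(q₀), one has c_ω · U(q,ω;q₀) = 0 for every ω ∈ Ω. -/
open scoped RealInnerProductSpace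

open InnerProductSpace in
/-- Gradient inequality for a convex differentiable function. -/
lemma grad_ineq_aux {n : ℕ} (C : EuclideanSpace ℝ (Fin n) → ℝ)
    (hconv : ConvexOn ℝ Set.univ C) (hdiff : Differentiable ℝ C)
    (x y : EuclideanSpace ℝ (Fin n)) :
    C x + ⟪gradient C x, y - x⟫ ≤ C y := by
  have hC : HasFDerivAt C (toDual ℝ _ (gradient C x)) x :=
    (hdiff x).hasGradientAt.hasFDerivAt
  have hL : HasDerivAt (fun t : ℝ => x + t • (y - x)) (y - x) 0 := by
    simpa using ((hasDerivAt_id (0 : ℝ)).smul_const (y - x)).const_add x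
  have h0 : (fun t : ℝ => x + t • (y - x)) 0 = x := by simp
  rw [← h0] at hC
  have hg : HasDerivAt (fun t : ℝ => C (x + t • (y - x))) ⟪gradient C x, y - x⟫ 0 := by
    have h := hC.comp_hasDerivAt 0 hL
    rw [InnerProductSpace.toDual_apply_apply, h0] at h
    exact h
  have ht := hasDerivAt_iff_tendsto_slope.mp hg
  have ht' : Filter.Tendsto (slope (fun t : ℝ => C (x + t • (y - x))) 0) (nhdsWithin 0 (Set.Ioi 0))
      (nhds ⟪gradient C x, y - x⟫) :=
    ht.mono_left (nhdsWithin_mono 0 (fun t ht => ne_of_gt ht))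
  have hbound : ∀ᶠ t in nhdsWithin (0:ℝ) (Set.Ioi 0),
      slope (fun t : ℝ => C (x + t • (y - x))) 0 t ≤ C y - C x := by
    filter_upwards [Ioc_mem_nhdsGT_of_mem (Set.mem_Ico.mpr ⟨le_refl (0:ℝ), zero_lt_one⟩)]
      with t htt
    obtain ⟨ht0, ht1⟩ := htt
    have hcomb := hconv.2 (Set.mem_univ x) (Set.mem_univ y)
      (by linarith : (0:ℝ) ≤ 1 - t) (le_of_lt ht0) (by ring)
    have hpt : x + t • (y - x) = (1 - t) • x + t • y := by module
    rw [slope_def_field]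
    simp only [sub_zero]
    rw [div_le_iff₀ ht0, hpt]
    simp only [smul_eq_mul] at hcomb
    simp only [zero_smul, add_zero]
    nlinarith [hcomb]
  have := le_of_tendsto ht' hbound
  linarith

/-- If `∇C(q₀) ∈ conv(Ω)` and `q` optimally solves the budget-zero problem, then
`∇C(q) = ∇C(q₀)` and for any convex decomposition `∇C(q₀) = Σ c_ω ω` over `Ω`,
one has `c_ω · U(q,ω;q₀) = 0` for every `ω ∈ Ω`. -/
theorem budget_zero_solution (n : ℕ) (Ω : Finset (EuclideanSpace ℝ (Fin n)))
    (C : EuclideanSpace ℝ (Fin n) → ℝ)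
    (hconv : ConvexOn ℝ Set.univ C) (hdiff : Differentiable ℝ C)
    (hfin : ∀ ν ∈ convexHull ℝ (↑Ω : Set (EuclideanSpace ℝ (Fin n))),
      BddAbove {r : ℝ | ∃ p : EuclideanSpace ℝ (Fin n), r = ⟪p, ν⟫ - C p})
    (μ : EuclideanSpace ℝ (Fin n))
    (hμ : μ ∈ convexHull ℝ (↑Ω : Set (EuclideanSpace ℝ (Fin n))))
    (q₀ : EuclideanSpace ℝ (Fin n))
    (hq₀ : gradient C q₀ ∈ convexHull ℝ (↑Ω : Set (EuclideanSpace ℝ (Fin n))))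
    (q : EuclideanSpace ℝ (Fin n))
    (hqfeas : ∀ ω ∈ Ω, 0 ≤ ⟪q - q₀, ω⟫ - C q + C q₀)
    (hqopt : ∀ r : EuclideanSpace ℝ (Fin n),
      (∀ ω ∈ Ω, 0 ≤ ⟪r - q₀, ω⟫ - C r + C q₀) →
      ⟪r - q₀, μ⟫ - C r + C q₀ ≤ ⟪q - q₀, μ⟫ - C q + C q₀) :
    gradient C q = gradient C q₀ ∧
    ∀ c : EuclideanSpace ℝ (Fin n) → ℝ,
      (∀ ω ∈ Ω, 0 ≤ c ω) → (∑ ω ∈ Ω, c ω) = 1 →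
      (∑ ω ∈ Ω, c ω • ω) = gradient C q₀ →
      ∀ ω ∈ Ω, c ω * (⟪q - q₀, ω⟫ - C q + C q₀) = 0 := by
  set g₀ := gradient C q₀ with hg₀def
  -- the feasibility inequality extends to the convex hull, in particular to g₀
  have hlin : IsLinearMap ℝ (fun ν : EuclideanSpace ℝ (Fin n) => ⟪q - q₀, ν⟫) :=
    ⟨fun a b => inner_add_right _ _ _, fun r v => real_inner_smul_right _ _ _⟩
  have hS : g₀ ∈ {ν : EuclideanSpace ℝ (Fin n) | C q - C q₀ ≤ ⟪q - q₀, ν⟫} := by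
    refine convexHull_min ?_ (convex_halfSpace_ge hlin _) hq₀
    intro ω hω
    have := hqfeas ω (Finset.mem_coe.mp hω)
    simp only [Set.mem_setOf_eq]
    linarith
  have h1 : 0 ≤ ⟪q - q₀, g₀⟫ - C q + C q₀ := by
    simp only [Set.mem_setOf_eq] at hS; linarith
  have h2 : ⟪q - q₀, g₀⟫ - C q + C q₀ ≤ 0 := by
    have := grad_ineq_aux C hconv hdiff q₀ q
    rw [real_inner_comm] at this
    linarith
  have heq : ⟪q - q₀, g₀⟫ - C q + C q₀ = 0 := le_antisymm h2 h1
  constructor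
  · -- gradient C q = g₀
    have hmin : ∀ z, C q - (InnerProductSpace.toDual ℝ _ g₀) q ≤
        C z - (InnerProductSpace.toDual ℝ _ g₀) z := by
      intro z
      have hz := grad_ineq_aux C hconv hdiff q₀ z
      have e1 : ⟪g₀, z - q₀⟫ = ⟪g₀, z⟫ - ⟪g₀, q₀⟫ := inner_sub_right _ _ _
      have e2 : ⟪q - q₀, g₀⟫ = ⟪g₀, q⟫ - ⟪g₀, q₀⟫ := by
        rw [real_inner_comm]; exact inner_sub_right _ _ _
      simp only [InnerProductSpace.toDual_apply_apply]
      linarith [heq, e2 ▸ heq]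
    have hlm : IsLocalMin (fun z => C z - (InnerProductSpace.toDual ℝ _ g₀) z) q :=
      Filter.Eventually.of_forall hmin
    have hf : HasFDerivAt (fun z => C z - (InnerProductSpace.toDual ℝ _ g₀) z)
        (fderiv ℝ C q - (InnerProductSpace.toDual ℝ _ g₀ : EuclideanSpace ℝ (Fin n) →L[ℝ] ℝ)) q :=
      (hdiff q).hasFDerivAt.sub (InnerProductSpace.toDual ℝ _ g₀ :
        EuclideanSpace ℝ (Fin n) →L[ℝ] ℝ).hasFDerivAt
    have hz := hlm.hasFDerivAt_eq_zero hf
    rw [sub_eq_zero] at hz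
    show (InnerProductSpace.toDual ℝ _).symm (fderiv ℝ C q) = g₀
    rw [hz, LinearIsometryEquiv.symm_apply_apply]
  · intro c hc0 hc1 hcsum ω hω
    have hsum : ∑ ω ∈ Ω, c ω * (⟪q - q₀, ω⟫ - C q + C q₀) = 0 := by
      have hx : ∑ ω ∈ Ω, c ω * ⟪q - q₀, ω⟫ = ⟪q - q₀, g₀⟫ := by
        rw [← hcsum, inner_sum]
        exact Finset.sum_congr rfl fun ω _ => (real_inner_smul_right _ _ _).symm
      calc ∑ ω ∈ Ω, c ω * (⟪q - q₀, ω⟫ - C q + C q₀)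
          = ∑ ω ∈ Ω, (c ω * ⟪q - q₀, ω⟫ + c ω * (C q₀ - C q)) :=
            Finset.sum_congr rfl (fun ω _ => by ring)
        _ = ⟪q - q₀, g₀⟫ + (∑ ω ∈ Ω, c ω) * (C q₀ - C q) := by
            rw [Finset.sum_add_distrib, hx, ← Finset.sum_mul]
        _ = 0 := by rw [hc1]; linarith
    have := (Finset.sum_eq_zero_iff_of_nonneg
      (fun ω hω => mul_nonneg (hc0 ω hω) (hqfeas ω hω))).mp hsum
    exact this ω hω
end

section
/- If C is strictly convex and differentiable with ∇C(q₀) ∈ conv(Ω), then q₀ is arbitrage-free: any q satisfying U(q,ω;q₀) ≥ 0 for all ω ∈ Ω also satisfies U(q,μ;q₀) ≤ 0 for all μ ∈ conv(Ω), with the unique optimizer being q₀ itself. -/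
open scoped RealInnerProductSpace

/-- Strict convexity along a line through `q₀` in direction `v ≠ 0`. -/
private lemma line_strictConvex {E : Type*} [NormedAddCommGroup E] [NormedSpace ℝ E]
    {C : E → ℝ} (hconv : StrictConvexOn ℝ Set.univ C) {v : E} (hv : v ≠ 0) (q₀ : E) :
    StrictConvexOn ℝ Set.univ (fun t : ℝ => C (q₀ + t • v)) := by
  refine ⟨convex_univ, fun x _ y _ hxy a b ha hb hab => ?_⟩
  have hpts : q₀ + x • v ≠ q₀ + y • v := by
    intro h
    exact hxy (smul_left_injective ℝ hv (add_left_cancel h))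
  have hq0 : q₀ = (a + b) • q₀ := by rw [hab, one_smul]
  have key : q₀ + (a • x + b • y) • v = a • (q₀ + x • v) + b • (q₀ + y • v) := by
    nth_rewrite 1 [hq0]
    simp only [smul_eq_mul]
    module
  simp only []
  rw [key]
  exact hconv.2 (Set.mem_univ _) (Set.mem_univ _) hpts ha hb hab

private lemma feasible_eq {n : ℕ} {Ω : Finset (EuclideanSpace ℝ (Fin n))}
    {C : EuclideanSpace ℝ (Fin n) → ℝ}
    (hconv : StrictConvexOn ℝ Set.univ C) (hdiff : Differentiable ℝ C)
    {q₀ : EuclideanSpace ℝ (Fin n)}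
    (hq₀ : gradient C q₀ ∈ convexHull ℝ (↑Ω : Set (EuclideanSpace ℝ (Fin n))))
    {q : EuclideanSpace ℝ (Fin n)}
    (hfeas : ∀ ω ∈ Ω, 0 ≤ ⟪q - q₀, ω⟫ - C q + C q₀) : q = q₀ := by
  by_contra hne
  have hv : q - q₀ ≠ 0 := sub_ne_zero.mpr hne
  -- the feasibility extends to the convex hull (it is a halfspace condition)
  set S : Set (EuclideanSpace ℝ (Fin n)) := {ν | C q - C q₀ ≤ ⟪q - q₀, ν⟫} with hS
  have hSconv : Convex ℝ S := by
    apply convex_halfSpace_ge (f := fun ν => ⟪q - q₀, ν⟫)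
    exact ⟨fun a b => inner_add_right _ _ _, fun c x => real_inner_smul_right _ _ _⟩
  have hsub : (↑Ω : Set (EuclideanSpace ℝ (Fin n))) ⊆ S := by
    intro ω hω
    have := hfeas ω hω
    simp only [hS, Set.mem_setOf_eq]
    linarith
  have hmem : gradient C q₀ ∈ S := convexHull_min hsub hSconv hq₀
  have h1 : C q - C q₀ ≤ ⟪q - q₀, gradient C q₀⟫ := hmem
  -- strict convexity gives the reverse strict inequality
  have hg : HasGradientAt C (gradient C q₀) q₀ := (hdiff q₀).hasGradientAt
  have hF : HasFDerivAt C (InnerProductSpace.toDual ℝ _ (gradient C q₀)) q₀ := hg.hasFDerivAt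
  have hline : HasDerivAt (fun t : ℝ => q₀ + t • (q - q₀)) (q - q₀) 0 := by
    simpa using ((hasDerivAt_id (0:ℝ)).smul_const (q - q₀)).const_add q₀
  have hcomp : HasDerivAt (fun t : ℝ => C (q₀ + t • (q - q₀)))
      ⟪gradient C q₀, q - q₀⟫ 0 := by
    have hF' : HasFDerivAt C (InnerProductSpace.toDual ℝ _ (gradient C q₀))
        ((fun t : ℝ => q₀ + t • (q - q₀)) 0) := by simpa using hF
    have := hF'.comp_hasDerivAt 0 hline
    rw [InnerProductSpace.toDual_apply_apply] at this
    exact this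
  have hsc := line_strictConvex hconv hv q₀
  have h2 := hsc.lt_slope_of_hasDerivAt (Set.mem_univ (0:ℝ)) (Set.mem_univ (1:ℝ))
    one_pos hcomp
  rw [slope_def_field] at h2
  simp only [one_smul, zero_smul, add_zero] at h2
  have hq1 : q₀ + (q - q₀) = q := by abel
  rw [hq1] at h2
  have h2' : ⟪gradient C q₀, q - q₀⟫ < C q - C q₀ := by
    rw [show (1:ℝ) - 0 = 1 by norm_num, div_one] at h2
    exact h2
  rw [real_inner_comm] at h2'
  linarith

/-- If `C` is strictly convex and differentiable with `∇C(q₀) ∈ conv(Ω)`, then `q₀` is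
arbitrage-free: any feasible `q` (nonnegative utility on every outcome) yields
nonpositive expected utility for every belief `μ ∈ conv(Ω)`, and the unique optimizer
is `q₀` itself. -/
theorem strictly_convex_arbitrage_free (n : ℕ) (Ω : Finset (EuclideanSpace ℝ (Fin n)))
    (C : EuclideanSpace ℝ (Fin n) → ℝ)
    (hconv : StrictConvexOn ℝ Set.univ C) (hdiff : Differentiable ℝ C)
    (hfin : ∀ ν ∈ convexHull ℝ (↑Ω : Set (EuclideanSpace ℝ (Fin n))),
      BddAbove {r : ℝ | ∃ p : EuclideanSpace ℝ (Fin n), r = ⟪p, ν⟫ - C p})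
    (q₀ : EuclideanSpace ℝ (Fin n))
    (hq₀ : gradient C q₀ ∈ convexHull ℝ (↑Ω : Set (EuclideanSpace ℝ (Fin n)))) :
    (∀ q : EuclideanSpace ℝ (Fin n),
      (∀ ω ∈ Ω, 0 ≤ ⟪q - q₀, ω⟫ - C q + C q₀) →
      ∀ μ ∈ convexHull ℝ (↑Ω : Set (EuclideanSpace ℝ (Fin n))),
        ⟪q - q₀, μ⟫ - C q + C q₀ ≤ 0) ∧
    (∀ μ ∈ convexHull ℝ (↑Ω : Set (EuclideanSpace ℝ (Fin n))),
      ∀ q : EuclideanSpace ℝ (Fin n),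
        (∀ ω ∈ Ω, 0 ≤ ⟪q - q₀, ω⟫ - C q + C q₀) →
        ⟪q - q₀, μ⟫ - C q + C q₀ = 0 → q = q₀) := by
  constructor
  · intro q hfeas μ hμ
    have hq : q = q₀ := feasible_eq hconv hdiff hq₀ hfeas
    subst hq
    simp
  · intro μ hμ q hfeas _
    exact feasible_eq hconv hdiff hq₀ hfeas
end

section
/- If ∇C(q₀) lies in the relative interior of conv(Ω), then q₀ is arbitrage-free: any q with U(q,ω;q₀) ≥ 0 for all ω ∈ Ω satisfies U(q,ω;q₀) = 0 for all ω ∈ Ω, and hence U(q,μ;q₀) = 0 for all μ ∈ conv(Ω). -/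
open scoped RealInnerProductSpace

/-- If `∇C(q₀)` lies in the relative interior of `conv(Ω)`, then `q₀` is arbitrage-free:
any `q` with `U(q,ω;q₀) ≥ 0` for all outcomes has `U(q,ω;q₀) = 0` for all outcomes,
hence `U(q,μ;q₀) = 0` for all `μ ∈ conv(Ω)`. -/
theorem relative_interior_arbitrage_free (n : ℕ) (Ω : Finset (EuclideanSpace ℝ (Fin n)))
    (C : EuclideanSpace ℝ (Fin n) → ℝ)
    (hconv : ConvexOn ℝ Set.univ C) (hdiff : Differentiable ℝ C)
    (hfin : ∀ ν ∈ convexHull ℝ (↑Ω : Set (EuclideanSpace ℝ (Fin n))),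
      BddAbove {r : ℝ | ∃ p : EuclideanSpace ℝ (Fin n), r = ⟪p, ν⟫ - C p})
    (q₀ : EuclideanSpace ℝ (Fin n))
    (hq₀ : gradient C q₀ ∈
      intrinsicInterior ℝ (convexHull ℝ (↑Ω : Set (EuclideanSpace ℝ (Fin n))))) :
    ∀ q : EuclideanSpace ℝ (Fin n),
      (∀ ω ∈ Ω, 0 ≤ ⟪q - q₀, ω⟫ - C q + C q₀) →
      (∀ ω ∈ Ω, ⟪q - q₀, ω⟫ - C q + C q₀ = 0) ∧
      (∀ μ ∈ convexHull ℝ (↑Ω : Set (EuclideanSpace ℝ (Fin n))),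
        ⟪q - q₀, μ⟫ - C q + C q₀ = 0) := by
  intro q hq
  set v : EuclideanSpace ℝ (Fin n) := q - q₀ with hv
  set g : EuclideanSpace ℝ (Fin n) := gradient C q₀ with hg
  set S : Set (EuclideanSpace ℝ (Fin n)) := convexHull ℝ (↑Ω) with hSdef
  -- nonnegativity on S
  have hSpos : ∀ μ ∈ S, 0 ≤ ⟪v, μ⟫ - C q + C q₀ := by
    intro μ hμ
    have hlin : IsLinearMap ℝ (fun x : EuclideanSpace ℝ (Fin n) => ⟪v, x⟫) :=
      ⟨fun x y => inner_add_right v x y, fun r x => real_inner_smul_right v x r⟩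
    have hcvx : Convex ℝ {x : EuclideanSpace ℝ (Fin n) | C q - C q₀ ≤ ⟪v, x⟫} :=
      convex_halfSpace_ge hlin (C q - C q₀)
    have hsub : (↑Ω : Set (EuclideanSpace ℝ (Fin n))) ⊆
        {x : EuclideanSpace ℝ (Fin n) | C q - C q₀ ≤ ⟪v, x⟫} := by
      intro ω hω
      have := hq ω hω
      simp only [Set.mem_setOf_eq]
      linarith
    have := convexHull_min hsub hcvx hμ
    simp only [Set.mem_setOf_eq] at this
    linarith
  -- gradient inequality
  have hgrad : ⟪g, v⟫ ≤ C q - C q₀ := by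
    have hφ : ConvexOn ℝ Set.univ (C ∘ (AffineMap.lineMap q₀ q : ℝ →ᵃ[ℝ] _)) := by
      have h := hconv.comp_affineMap (AffineMap.lineMap q₀ q : ℝ →ᵃ[ℝ] _)
      simpa using h
    have hline : HasDerivAt (fun t : ℝ => (AffineMap.lineMap q₀ q : ℝ →ᵃ[ℝ] _) t) v 0 := by
      have h1 : HasDerivAt (fun t : ℝ => t • v + q₀) v 0 := by
        simpa using ((hasDerivAt_id (0:ℝ)).smul_const v).add_const q₀
      have heq : (fun t : ℝ => (AffineMap.lineMap q₀ q : ℝ →ᵃ[ℝ] _) t)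
          = fun t => t • v + q₀ := by
        funext t
        simp only [AffineMap.lineMap_apply, hv, vsub_eq_sub, vadd_eq_add]
      rw [heq]
      exact h1
    have hF : HasFDerivAt C (InnerProductSpace.toDual ℝ _ g) q₀ :=
      ((hdiff q₀).hasGradientAt).hasFDerivAt
    have hcomp : HasDerivAt (C ∘ (AffineMap.lineMap q₀ q : ℝ →ᵃ[ℝ] _)) ⟪g, v⟫ 0 := by
      have h0 : (AffineMap.lineMap q₀ q : ℝ →ᵃ[ℝ] _) 0 = q₀ := by simp
      have hF' : HasFDerivAt C (InnerProductSpace.toDual ℝ _ g)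
          ((AffineMap.lineMap q₀ q : ℝ →ᵃ[ℝ] _) 0) := by rw [h0]; exact hF
      have hc := hF'.comp_hasDerivAt (0:ℝ) hline
      simpa [InnerProductSpace.toDual_apply_apply] using hc
    have hs := hφ.le_slope_of_hasDerivAt (Set.mem_univ (0:ℝ)) (Set.mem_univ (1:ℝ))
      one_pos hcomp
    have hsl : slope (C ∘ (AffineMap.lineMap q₀ q : ℝ →ᵃ[ℝ] _)) 0 1 = C q - C q₀ := by
      simp [slope_def_field]
    rw [hsl] at hs
    exact hs
  have hgS : g ∈ S := intrinsicInterior_subset hq₀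
  -- value at g is zero
  have h0 : ⟪v, g⟫ - C q + C q₀ = 0 := by
    have h1 := hSpos g hgS
    have h2 : ⟪v, g⟫ = ⟪g, v⟫ := real_inner_comm g v
    linarith
  -- main claim
  have key : ∀ μ ∈ S, ⟪v, μ⟫ - C q + C q₀ = 0 := by
    intro μ hμ
    -- push past g
    obtain ⟨gA, hgAint, hgAval⟩ := hq₀
    have hμspan : μ ∈ affineSpan ℝ S := subset_affineSpan ℝ S hμ
    have hgspan : g ∈ affineSpan ℝ S := subset_affineSpan ℝ S hgS
    -- the path
    have hmem : ∀ t : ℝ, μ + t • (g - μ) ∈ affineSpan ℝ S := by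
      intro t
      have := AffineSubspace.smul_vsub_vadd_mem (affineSpan ℝ S) t hgspan hμspan hμspan
      simpa [vsub_eq_sub, vadd_eq_add, add_comm] using this
    set ψ : ℝ → (affineSpan ℝ S : Set _) := fun t => ⟨μ + t • (g - μ), hmem t⟩ with hψ
    have hψc : Continuous ψ := by
      apply Continuous.subtype_mk
      continuity
    have hψ1 : ψ 1 ∈ interior ((↑) ⁻¹' S : Set (affineSpan ℝ S)) := by
      have : ψ 1 = gA := by
        apply Subtype.ext
        simp [hψ, hgAval]
      rw [this]; exact hgAint
    have hopen : IsOpen (ψ ⁻¹' interior ((↑) ⁻¹' S : Set (affineSpan ℝ S))) :=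
      isOpen_interior.preimage hψc
    have h1mem : (1:ℝ) ∈ ψ ⁻¹' interior ((↑) ⁻¹' S) := hψ1
    obtain ⟨ε, hε, hball⟩ := Metric.isOpen_iff.mp hopen 1 h1mem
    set t : ℝ := 1 + ε/2 with ht
    have htmem : t ∈ ψ ⁻¹' interior ((↑) ⁻¹' S) := by
      apply hball
      have hd : dist t 1 = ε/2 := by
        rw [Real.dist_eq, ht, show (1:ℝ)+ε/2-1 = ε/2 by ring,
          abs_of_nonneg (by linarith)]
      rw [Metric.mem_ball, hd]
      linarith
    have hzS : μ + t • (g - μ) ∈ S := by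
      have := interior_subset htmem
      simpa [hψ] using this
    set z : EuclideanSpace ℝ (Fin n) := μ + t • (g - μ) with hz
    have ht1 : 1 < t := by rw [ht]; linarith
    have ht0 : 0 < t := by linarith
    -- g = (1 - 1/t) • μ + (1/t) • z
    have hgcomb : g = (1 - 1/t) • μ + (1/t) • z := by
      rw [hz, smul_add, smul_smul, one_div_mul_cancel ht0.ne', one_smul,
        sub_smul, one_smul]
      abel
    have hfz := hSpos z hzS
    have hfμ := hSpos μ hμ
    -- affine combination of f values
    have hfg : ⟪v, g⟫ = (1 - 1/t) * ⟪v, μ⟫ + (1/t) * ⟪v, z⟫ := by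
      rw [hgcomb, inner_add_right, real_inner_smul_right, real_inner_smul_right]
    have hs1 : (0:ℝ) < 1/t := by positivity
    have hs2 : 1/t < 1 := by
      rw [div_lt_one ht0]; exact ht1
    have hsum : (1 - 1/t) * (⟪v, μ⟫ - C q + C q₀)
        + (1/t) * (⟪v, z⟫ - C q + C q₀) = 0 := by
      linear_combination h0 - hfg
    have hA : 0 ≤ (1 - 1/t) * (⟪v, μ⟫ - C q + C q₀) := mul_nonneg (by linarith) hfμ
    have hB : 0 ≤ (1/t) * (⟪v, z⟫ - C q + C q₀) := mul_nonneg hs1.le hfz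
    have hzero : (1 - 1/t) * (⟪v, μ⟫ - C q + C q₀) = 0 := le_antisymm (by linarith) hA
    rcases mul_eq_zero.mp hzero with h | h
    · linarith
    · exact h
  refine ⟨fun ω hω => key ω (subset_convexHull ℝ _ hω), key⟩
end

section
/- For the hypercube outcome set Ω = {0,1}ⁿ and the quadratic cost (Euclidean geometry), the Euclidean acute angles property holds for every face X of conv(Ω): for every point ν̄ ∈ conv(Ω), letting a be the orthogonal projection of ν̄ onto aff(X), one has (ν̄ − a)·(ω − a) ≥ 0 for all ω ∈ Ω (equivalently (ν̄−a)·(ω−x) ≥ 0 for all x ∈ X, ω ∈ Ω). -/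
open scoped RealInnerProductSpace

/-- Euclidean acute angles for the hypercube `Ω = {0,1}ⁿ`: for every (nonempty) face
`X` of `conv(Ω)`, every `ν̄ ∈ conv(Ω)` and its orthogonal projection `a` onto
`aff(X)`, one has `⟪ν̄ − a, ω − a⟫ ≥ 0` for all `ω ∈ Ω`. -/
theorem hypercube_euclidean_acute_angles (n : ℕ)
    (Ω : Set (EuclideanSpace ℝ (Fin n)))
    (hΩ : Ω = {x : EuclideanSpace ℝ (Fin n) | ∀ i, x i = 0 ∨ x i = 1})
    (X : Set (EuclideanSpace ℝ (Fin n))) (hXne : X.Nonempty)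
    (hface : ∃ u : EuclideanSpace ℝ (Fin n),
      X = {ω ∈ Ω | ∀ ω' ∈ Ω, ⟪u, ω'⟫ ≤ ⟪u, ω⟫})
    (νbar : EuclideanSpace ℝ (Fin n)) (hν : νbar ∈ convexHull ℝ Ω)
    (a : EuclideanSpace ℝ (Fin n))
    (haX : a ∈ affineSpan ℝ X)
    (hproj : ∀ x ∈ affineSpan ℝ X, ⟪νbar - a, x - a⟫ = 0) :
    ∀ ω ∈ Ω, 0 ≤ ⟪νbar - a, ω - a⟫ := by
  obtain ⟨u, hX⟩ := hface
  obtain ⟨x₀, hx₀⟩ := hXne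
  set c : Fin n → ℝ := fun i => if 0 < u i then 1 else 0 with hc
  -- inner product with a "flip"
  have hinner_flip : ∀ (v y : EuclideanSpace ℝ (Fin n)) (t : ℝ) (j : Fin n),
      ⟪v, y + t • EuclideanSpace.single j (1:ℝ)⟫ = ⟪v, y⟫ + t * v j := by
    intro v y t j
    rw [inner_add_right, real_inner_smul_right]
    simp [EuclideanSpace.inner_single_right, mul_comm]
  -- flipping a coordinate keeps membership in Ω
  have hflip_mem : ∀ y ∈ Ω, ∀ j : Fin n,
      y + (1 - 2 * y j) • EuclideanSpace.single j (1:ℝ) ∈ Ω := by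
    intro y hy j
    rw [hΩ] at hy ⊢
    intro k
    by_cases hk : k = j
    · subst hk
      rcases hy k with h | h <;>
        simp [PiLp.add_apply, PiLp.smul_apply, EuclideanSpace.single_apply, h] <;>
        norm_num
    · rcases hy k with h | h <;>
        simp [PiLp.add_apply, PiLp.smul_apply, EuclideanSpace.single_apply, hk, h]
  -- coordinates with u i ≠ 0 are fixed on X
  have hfix : ∀ i : Fin n, u i ≠ 0 → ∀ x ∈ X, x i = c i := by
    intro i hui x hx
    rw [hX] at hx
    obtain ⟨hxΩ, hmax⟩ := hx
    have hxi : x i = 0 ∨ x i = 1 := by rw [hΩ] at hxΩ; exact hxΩ i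
    have hmem := hflip_mem x hxΩ i
    have hval := hinner_flip u x (1 - 2 * x i) i
    have hle := hmax _ hmem
    rw [hval] at hle
    rcases lt_or_gt_of_ne hui with hneg | hpos
    · -- u i < 0 : x i must be 0
      have hci : c i = 0 := by simp [hc, not_lt.mpr hneg.le]
      rcases hxi with h | h
      · rw [h, hci]
      · exfalso; rw [h] at hle; nlinarith
    · -- 0 < u i : x i must be 1
      have hci : c i = 1 := by simp [hc, hpos]
      rcases hxi with h | h
      · exfalso; rw [h] at hle; nlinarith
      · rw [h, hci]
  -- a also has these coordinates fixed
  have ha : ∀ i : Fin n, u i ≠ 0 → a i = c i := by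
    intro i hui
    refine affineSpan_induction (p := fun x => x i = c i) haX (fun x hx => hfix i hui x hx) ?_
    intro t p q r hp hq hr
    show (t • (p - q) + r) i = c i
    simp [PiLp.add_apply, PiLp.smul_apply, PiLp.sub_apply, hp, hq, hr]
  -- on free coordinates, νbar and a agree
  have hfree : ∀ j : Fin n, u j = 0 → νbar j = a j := by
    intro j huj
    have hx₀Ω : x₀ ∈ Ω := by rw [hX] at hx₀; exact hx₀.1
    have hx₀j : x₀ j = 0 ∨ x₀ j = 1 := by rw [hΩ] at hx₀Ω; exact hx₀Ω j
    set t : ℝ := 1 - 2 * x₀ j with ht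
    have htne : t ≠ 0 := by rcases hx₀j with h | h <;> simp [ht, h] <;> norm_num
    set x₁ : EuclideanSpace ℝ (Fin n) := x₀ + t • EuclideanSpace.single j (1:ℝ) with hx₁
    have hx₁X : x₁ ∈ X := by
      rw [hX]
      refine ⟨hflip_mem x₀ hx₀Ω j, ?_⟩
      intro ω' hω'
      have := (hX ▸ hx₀).2 ω' hω'
      rw [hx₁, hinner_flip, huj]
      linarith
    have h0 := hproj x₀ (subset_affineSpan ℝ X hx₀)
    have h1 := hproj x₁ (subset_affineSpan ℝ X hx₁X)
    have : ⟪νbar - a, x₁ - a⟫ - ⟪νbar - a, x₀ - a⟫ = t * (νbar - a) j := by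
      rw [← inner_sub_right]
      have : x₁ - a - (x₀ - a) = t • EuclideanSpace.single j (1:ℝ) := by
        rw [hx₁]; abel
      rw [this, real_inner_smul_right]
      simp [EuclideanSpace.inner_single_right, mul_comm]
    rw [h0, h1] at this
    have hz0 : t * (νbar - a) j = 0 := by linarith
    have hz : (νbar - a) j = 0 := by
      rcases mul_eq_zero.mp hz0 with h | h
      · exact absurd h htne
      · exact h
    have := hz
    rw [PiLp.sub_apply] at this
    linarith
  -- νbar is in [0,1] coordinatewise
  have hbound : ∀ i : Fin n, 0 ≤ νbar i ∧ νbar i ≤ 1 := by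
    have hsub : convexHull ℝ Ω ⊆ {x : EuclideanSpace ℝ (Fin n) | ∀ i, 0 ≤ x i ∧ x i ≤ 1} := by
      apply convexHull_min
      · intro x hx i
        rw [hΩ] at hx
        rcases hx i with h | h <;> simp [h]
      · intro x hx y hy s t hs ht hst i
        have hx' := hx i
        have hy' := hy i
        have : (s • x + t • y) i = s * x i + t * y i := by
          simp [PiLp.add_apply, PiLp.smul_apply]
        rw [this]
        constructor
        · nlinarith [hx'.1, hy'.1]
        · nlinarith [hx'.2, hy'.2]
    exact hsub hν
  -- conclude
  intro ω hω
  have hωc : ∀ i, ω i = 0 ∨ ω i = 1 := by rw [hΩ] at hω; exact hω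
  rw [PiLp.inner_apply]
  apply Finset.sum_nonneg
  intro i _
  simp only [RCLike.inner_apply, conj_trivial, PiLp.sub_apply]
  by_cases hui : u i = 0
  · rw [hfree i hui]; simp
  · rw [ha i hui]
    have hni := hbound i
    rcases lt_or_gt_of_ne hui with hneg | hpos
    · have : c i = 0 := by simp [hc, not_lt.mpr hneg.le]
      rw [this]
      rcases hωc i with h | h <;> rw [h] <;> nlinarith [hni.1, hni.2]
    · have : c i = 1 := by simp [hc, hpos]
      rw [this]
      rcases hωc i with h | h <;> rw [h] <;> nlinarith [hni.1, hni.2]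
end

section
/- For the simplex outcome set Ω = {e₁,…,e_n} (standard basis vectors in ℝⁿ) and the face X = {e₁,…,e_k} with 1 ≤ k ≤ n, the orthogonal projections e'_j of e_j (for j > k) onto the affine space A' = e₁ + X^⊥ satisfy (e'_j − e₁)·(e'_{j'} − e₁) = 1/k for all distinct j, j' > k; in particular all pairwise inner products of projected directions are positive. -/
open scoped RealInnerProductSpace

/-- For the simplex outcomes `Ω = {e₁,…,e_n}` and the face `X = {e₁,…,e_k}`
(`1 ≤ k ≤ n`), the orthogonal projections `e'_j` of `e_j` (for `j > k`, i.e. index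
`≥ k` when 0-based) onto `A' = e₁ + X^⊥` satisfy
`⟪e'_j − e₁, e'_{j'} − e₁⟫ = 1/k > 0` for distinct `j, j'`. -/
theorem simplex_projection_inner (n k : ℕ) (hk1 : 1 ≤ k) (hkn : k ≤ n)
    (X : Set (EuclideanSpace ℝ (Fin n)))
    (hX : X = {v : EuclideanSpace ℝ (Fin n) |
      ∃ i : Fin n, (i : ℕ) < k ∧ v = EuclideanSpace.single i (1 : ℝ)})
    (A' : Set (EuclideanSpace ℝ (Fin n)))
    (hA' : A' = {v : EuclideanSpace ℝ (Fin n) |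
      ∃ u : EuclideanSpace ℝ (Fin n),
        (∀ x ∈ X, ∀ x' ∈ X, ⟪u, x' - x⟫ = 0) ∧
        v = EuclideanSpace.single (⟨0, lt_of_lt_of_le hk1 hkn⟩ : Fin n) (1 : ℝ) + u})
    (j j' : Fin n) (hj : k ≤ (j : ℕ)) (hj' : k ≤ (j' : ℕ)) (hjj' : j ≠ j')
    (p p' : EuclideanSpace ℝ (Fin n))
    (hp : p ∈ A' ∧ ∀ a ∈ A', ⟪EuclideanSpace.single j (1 : ℝ) - p, a - p⟫ = 0)
    (hp' : p' ∈ A' ∧ ∀ a ∈ A', ⟪EuclideanSpace.single j' (1 : ℝ) - p', a - p'⟫ = 0) :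
    ⟪p - EuclideanSpace.single (⟨0, lt_of_lt_of_le hk1 hkn⟩ : Fin n) (1 : ℝ),
      p' - EuclideanSpace.single (⟨0, lt_of_lt_of_le hk1 hkn⟩ : Fin n) (1 : ℝ)⟫
      = 1 / (k : ℝ) ∧
    0 < ⟪p - EuclideanSpace.single (⟨0, lt_of_lt_of_le hk1 hkn⟩ : Fin n) (1 : ℝ),
      p' - EuclideanSpace.single (⟨0, lt_of_lt_of_le hk1 hkn⟩ : Fin n) (1 : ℝ)⟫ := by
  subst hX hA'
  set i0 : Fin n := ⟨0, lt_of_lt_of_le hk1 hkn⟩ with hi0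
  have hk0 : (0 : ℝ) < (k : ℝ) := by exact_mod_cast hk1
  -- the index set of the first k coordinates
  set F : Finset (Fin n) := Finset.univ.filter (fun i : Fin n => (i : ℕ) < k) with hF
  have hFcard : F.card = k := by
    have : F = Finset.map (Fin.castLEEmb hkn) Finset.univ := by
      ext i
      simp only [hF, Finset.mem_filter, Finset.mem_univ, true_and, Finset.mem_map,
        Fin.castLEEmb_apply]
      constructor
      · intro hi
        exact ⟨⟨(i : ℕ), hi⟩, by ext; simp⟩
      · rintro ⟨a, rfl⟩
        simp [a.isLt]
    rw [this, Finset.card_map, Finset.card_univ, Fintype.card_fin]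
  have hi0F : i0 ∈ F := by
    simp only [hF, Finset.mem_filter, Finset.mem_univ, true_and, hi0]
    omega
  -- key: coordinates of any projection q of e_jj
  have key : ∀ (jj : Fin n), k ≤ (jj : ℕ) →
      ∀ q : EuclideanSpace ℝ (Fin n),
      (∃ u : EuclideanSpace ℝ (Fin n),
        (∀ x ∈ {v : EuclideanSpace ℝ (Fin n) |
          ∃ i : Fin n, (i : ℕ) < k ∧ v = EuclideanSpace.single i (1 : ℝ)},
         ∀ x' ∈ {v : EuclideanSpace ℝ (Fin n) |
          ∃ i : Fin n, (i : ℕ) < k ∧ v = EuclideanSpace.single i (1 : ℝ)},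
          ⟪u, x' - x⟫ = 0) ∧
        q = EuclideanSpace.single i0 (1 : ℝ) + u) →
      (∀ a ∈ {v : EuclideanSpace ℝ (Fin n) |
        ∃ u : EuclideanSpace ℝ (Fin n),
          (∀ x ∈ {v : EuclideanSpace ℝ (Fin n) |
            ∃ i : Fin n, (i : ℕ) < k ∧ v = EuclideanSpace.single i (1 : ℝ)},
           ∀ x' ∈ {v : EuclideanSpace ℝ (Fin n) |
            ∃ i : Fin n, (i : ℕ) < k ∧ v = EuclideanSpace.single i (1 : ℝ)},
            ⟪u, x' - x⟫ = 0) ∧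
          v = EuclideanSpace.single i0 (1 : ℝ) + u},
        ⟪EuclideanSpace.single jj (1 : ℝ) - q, a - q⟫ = 0) →
      ∀ i : Fin n, q i - EuclideanSpace.single i0 (1 : ℝ) i =
        if (i : ℕ) < k then -(1 / (k : ℝ)) else if i = jj then 1 else 0 := by
    intro jj hjj q ⟨u, hu, hqu⟩ horth
    -- the first k coordinates of u are all equal
    have huc : ∀ i : Fin n, (i : ℕ) < k → u i = u i0 := by
      intro i hi
      have h := hu (EuclideanSpace.single i0 (1 : ℝ)) ⟨i0, hk1, rfl⟩
        (EuclideanSpace.single i (1 : ℝ)) ⟨i, hi, rfl⟩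
      rw [inner_sub_right] at h
      simp only [EuclideanSpace.inner_single_right, one_mul, RCLike.conj_to_real] at h
      linarith [h]
    -- for any w perpendicular to the differences, q + w ∈ A' and so e_jj - q ⟂ w
    have hperp : ∀ w : EuclideanSpace ℝ (Fin n),
        (∀ x ∈ {v : EuclideanSpace ℝ (Fin n) |
          ∃ i : Fin n, (i : ℕ) < k ∧ v = EuclideanSpace.single i (1 : ℝ)},
         ∀ x' ∈ {v : EuclideanSpace ℝ (Fin n) |
          ∃ i : Fin n, (i : ℕ) < k ∧ v = EuclideanSpace.single i (1 : ℝ)},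
          ⟪w, x' - x⟫ = 0) →
        ⟪EuclideanSpace.single jj (1 : ℝ) - q, w⟫ = 0 := by
      intro w hw
      have hmem : q + w ∈ {v : EuclideanSpace ℝ (Fin n) |
        ∃ u : EuclideanSpace ℝ (Fin n),
          (∀ x ∈ {v : EuclideanSpace ℝ (Fin n) |
            ∃ i : Fin n, (i : ℕ) < k ∧ v = EuclideanSpace.single i (1 : ℝ)},
           ∀ x' ∈ {v : EuclideanSpace ℝ (Fin n) |
            ∃ i : Fin n, (i : ℕ) < k ∧ v = EuclideanSpace.single i (1 : ℝ)},
            ⟪u, x' - x⟫ = 0) ∧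
          v = EuclideanSpace.single i0 (1 : ℝ) + u} := by
        refine ⟨u + w, fun x hx x' hx' => ?_, by rw [hqu]; abel⟩
        rw [inner_add_left, hu x hx x' hx', hw x hx x' hx', add_zero]
      have := horth _ hmem
      rwa [add_sub_cancel_left] at this
    -- coordinates of q for i ≥ k
    have hqi : ∀ i : Fin n, k ≤ (i : ℕ) → q i = if i = jj then 1 else 0 := by
      intro i hi
      have hw : ∀ x ∈ {v : EuclideanSpace ℝ (Fin n) |
          ∃ i : Fin n, (i : ℕ) < k ∧ v = EuclideanSpace.single i (1 : ℝ)},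
         ∀ x' ∈ {v : EuclideanSpace ℝ (Fin n) |
          ∃ i : Fin n, (i : ℕ) < k ∧ v = EuclideanSpace.single i (1 : ℝ)},
          ⟪(EuclideanSpace.single i (1 : ℝ) : EuclideanSpace ℝ (Fin n)), x' - x⟫ = 0 := by
        rintro x ⟨a, ha, rfl⟩ x' ⟨b, hb, rfl⟩
        have hbi : i ≠ b := by rintro rfl; omega
        have hai : i ≠ a := by rintro rfl; omega
        rw [inner_sub_right]
        simp only [EuclideanSpace.inner_single_left, EuclideanSpace.single_apply, map_one,
          one_mul]
        rw [if_neg hbi, if_neg hai, sub_self]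
      have h := hperp _ hw
      rw [inner_sub_left] at h
      simp only [EuclideanSpace.inner_single_right, one_mul, RCLike.conj_to_real,
        EuclideanSpace.single_apply] at h
      linarith [h]
    -- sum of first k coordinates of q is 0
    have hsum : ∑ i ∈ F, q i = 0 := by
      set s : EuclideanSpace ℝ (Fin n) := ∑ i ∈ F, EuclideanSpace.single i (1 : ℝ) with hs
      have hsw : ∀ x ∈ {v : EuclideanSpace ℝ (Fin n) |
          ∃ i : Fin n, (i : ℕ) < k ∧ v = EuclideanSpace.single i (1 : ℝ)},
         ∀ x' ∈ {v : EuclideanSpace ℝ (Fin n) |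
          ∃ i : Fin n, (i : ℕ) < k ∧ v = EuclideanSpace.single i (1 : ℝ)},
          ⟪s, x' - x⟫ = 0 := by
        rintro x ⟨a, ha, rfl⟩ x' ⟨b, hb, rfl⟩
        rw [hs, sum_inner]
        have hterm : ∀ i ∈ F,
            ⟪(EuclideanSpace.single i (1:ℝ) : EuclideanSpace ℝ (Fin n)),
              EuclideanSpace.single b (1:ℝ) - EuclideanSpace.single a (1:ℝ)⟫ =
            (if b = i then (1:ℝ) else 0) - (if a = i then (1:ℝ) else 0) := by
          intro i _
          simp [inner_sub_right, EuclideanSpace.inner_single_left,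
            EuclideanSpace.single_apply, eq_comm]
        rw [Finset.sum_congr rfl hterm, Finset.sum_sub_distrib]
        have hb' : b ∈ F := by simp [hF, hb]
        have ha' : a ∈ F := by simp [hF, ha]
        rw [Finset.sum_ite_eq F b (fun _ => (1:ℝ)), Finset.sum_ite_eq F a (fun _ => (1:ℝ)),
          if_pos hb', if_pos ha', sub_self]
      have h := hperp s hsw
      rw [inner_sub_left, hs, inner_sum, inner_sum] at h
      simp only [EuclideanSpace.inner_single_right, one_mul, RCLike.conj_to_real,
        EuclideanSpace.single_apply] at h
      have hjjF : ∀ i ∈ F, (if (i : Fin n) = jj then (1:ℝ) else 0) = 0 := by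
        intro i hiF
        rw [if_neg]
        intro hEq
        have hik : (i : ℕ) < k := by simpa [hF] using hiF
        rw [hEq] at hik
        omega
      rw [Finset.sum_congr rfl hjjF, Finset.sum_const, smul_zero] at h
      linarith [h]
    -- value of u at i0
    have hui0 : u i0 = -(1 / (k : ℝ)) := by
      have hq_on_F : ∀ i ∈ F, q i = (if i = i0 then (1:ℝ) else 0) + u i0 := by
        intro i hiF
        have hik : (i : ℕ) < k := by simpa [hF] using hiF
        have : q i = EuclideanSpace.single i0 (1:ℝ) i + u i := by
          rw [hqu]; rfl
        rw [this, EuclideanSpace.single_apply, huc i hik]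
      rw [Finset.sum_congr rfl hq_on_F, Finset.sum_add_distrib,
        Finset.sum_ite_eq' F i0 (fun _ => (1:ℝ)), if_pos hi0F, Finset.sum_const, hFcard,
        nsmul_eq_mul] at hsum
      have hkne : (k:ℝ) ≠ 0 := ne_of_gt hk0
      field_simp
      linear_combination hsum
    -- conclude
    intro i
    by_cases hik : (i : ℕ) < k
    · have hqval : q i = EuclideanSpace.single i0 (1:ℝ) i + u i := by rw [hqu]; rfl
      rw [if_pos hik, hqval, huc i hik, hui0]
      ring
    · rw [if_neg hik]
      have hi0ne : i ≠ i0 := by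
        intro h; rw [h] at hik; exact hik (by simpa [hi0] using (show 0 < k from hk1))
      rw [hqi i (le_of_not_gt hik), EuclideanSpace.single_apply, if_neg hi0ne, sub_zero]
  obtain ⟨hpA, hpO⟩ := hp
  obtain ⟨hp'A, hp'O⟩ := hp'
  have kp := key j hj p hpA hpO
  have kp' := key j' hj' p' hp'A hp'O
  have hinner : ⟪p - EuclideanSpace.single i0 (1 : ℝ),
      p' - EuclideanSpace.single i0 (1 : ℝ)⟫ = 1 / (k : ℝ) := by
    rw [PiLp.inner_apply]
    have hterm : ∀ i : Fin n, ⟪(p - EuclideanSpace.single i0 (1:ℝ)) i,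
        (p' - EuclideanSpace.single i0 (1:ℝ)) i⟫ =
        if (i : ℕ) < k then 1 / ((k : ℝ) * k) else 0 := by
      intro i
      have h1 : (p - EuclideanSpace.single i0 (1:ℝ)) i = p i - EuclideanSpace.single i0 (1:ℝ) i := rfl
      have h2 : (p' - EuclideanSpace.single i0 (1:ℝ)) i = p' i - EuclideanSpace.single i0 (1:ℝ) i := rfl
      rw [RCLike.inner_apply, RCLike.conj_to_real, h1, h2, kp i, kp' i]
      by_cases hik : (i : ℕ) < k
      · rw [if_pos hik, if_pos hik, if_pos hik]
        field_simp
      · rw [if_neg hik, if_neg hik, if_neg hik]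
        by_cases hij : i = j
        · rw [if_pos hij, if_neg (by rw [hij]; exact hjj'), zero_mul]
        · rw [if_neg hij, mul_zero]
    rw [Finset.sum_congr rfl (fun i _ => hterm i), Finset.sum_ite, Finset.sum_const_zero,
      add_zero, Finset.sum_const]
    have : Finset.univ.filter (fun i : Fin n => (i : ℕ) < k) = F := rfl
    rw [this, hFcard, nsmul_eq_mul]
    field_simp
  exact ⟨hinner, by rw [hinner]; positivity⟩
end
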